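/- Let H = H₁ ⊕ H₂ with orthogonal projections {P_m} such that each P_m projects into either H₁ or H₂ (i.e., the index set splits as Λ₁ ⊔ Λ₂ with P_m ≤ Π_1 for m ∈ Λ₁ and P_m ≤ Π_2 for m ∈ Λ₂, where Π_i projects onto H_i). If ρ = p ρ₁ ⊕ (1-p) ρ₂ with ρ_i a density operator on H_i and 0 ≤ p ≤ 1, then C(ρ) = p C(ρ₁) + (1-p) C(ρ₂), where C(τ) = 1 - Σ_m Tr[(P_m √τ P_m)^2] (restricting the sum to the relevant blocks for ρ₁, ρ₂). -/

import Mathlib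

open scoped ComplexOrder

open Classical in
/-- The positive semidefinite square root of a matrix (zero if not psd). -/
noncomputable def msqrt {n : Type*} [Fintype n] [DecidableEq n]
    (ρ : Matrix n n ℂ) : Matrix n n ℂ :=
  if h : ρ.PosSemidef then
    (h.1.eigenvectorUnitary : Matrix n n ℂ) *
      Matrix.diagonal ((↑) ∘ (√·) ∘ h.1.eigenvalues) *
      (star (h.1.eigenvectorUnitary : Matrix n n ℂ))
  else 0

open scoped MatrixOrder

lemma psd_eq_sqrt_of_sq_eq {n : Type*} [Fintype n] [DecidableEq n]
    {B : Matrix n n ℂ} (hB : B.PosSemidef) (A : Matrix n n ℂ) (h : B ^ 2 = A) :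
    B = CFC.sqrt A :=
  (CFC.sqrt_unique (by rw [← sq]; exact h) hB.nonneg).symm

lemma msqrt_of_psd {n : Type*} [Fintype n] [DecidableEq n]
    {ρ : Matrix n n ℂ} (h : ρ.PosSemidef) : msqrt ρ = CFC.sqrt ρ := by
  rw [CFC.sqrt_eq_cfc, cfc_nnreal_eq_real _ ρ h.nonneg, h.1.cfc_eq]
  simp only [msqrt, dif_pos h, Matrix.IsHermitian.cfc, Unitary.conjStarAlgAut_apply]
  congr 3
  funext i
  simp [h.eigenvalues_nonneg i]

lemma psd_smul {n : Type*} [Fintype n] [DecidableEq n]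
    {ρ : Matrix n n ℂ} (h : ρ.PosSemidef) {r : ℝ} (hr : 0 ≤ r) :
    ((r : ℂ) • ρ).PosSemidef := by
  constructor
  · unfold Matrix.IsHermitian
    rw [Matrix.conjTranspose_smul, h.1.eq]
    simp
  · intro x
    exact (h.smul (show (0 : ℂ) ≤ (r : ℂ) by exact_mod_cast hr)).2 x

lemma psd_fromBlocks {n m : Type*} [Fintype n] [Fintype m] [DecidableEq n] [DecidableEq m]
    {A : Matrix n n ℂ} {D : Matrix m m ℂ} (hA : A.PosSemidef) (hD : D.PosSemidef) :
    (Matrix.fromBlocks A 0 0 D).PosSemidef := by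
  have h := Matrix.posSemidef_conjTranspose_mul_self (Matrix.fromBlocks (CFC.sqrt A) 0 0 (CFC.sqrt D))
  rw [Matrix.fromBlocks_conjTranspose, Matrix.fromBlocks_multiply,
    (Matrix.nonneg_iff_posSemidef.mp (CFC.sqrt_nonneg A)).1.eq, (Matrix.nonneg_iff_posSemidef.mp (CFC.sqrt_nonneg D)).1.eq] at h
  simpa [CFC.sqrt_mul_sqrt_self A hA.nonneg, CFC.sqrt_mul_sqrt_self D hD.nonneg] using h

lemma msqrt_fromBlocks {n m : Type*} [Fintype n] [Fintype m] [DecidableEq n] [DecidableEq m]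
    {A : Matrix n n ℂ} {D : Matrix m m ℂ} (hA : A.PosSemidef) (hD : D.PosSemidef) :
    msqrt (Matrix.fromBlocks A 0 0 D) = Matrix.fromBlocks (msqrt A) (0 : Matrix n m ℂ)
      (0 : Matrix m n ℂ) (msqrt D) := by
  rw [msqrt_of_psd (psd_fromBlocks hA hD), msqrt_of_psd hA, msqrt_of_psd hD]
  refine (psd_eq_sqrt_of_sq_eq (psd_fromBlocks (Matrix.nonneg_iff_posSemidef.mp (CFC.sqrt_nonneg A)) (Matrix.nonneg_iff_posSemidef.mp (CFC.sqrt_nonneg D))) _ ?_).symm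
  rw [sq, Matrix.fromBlocks_multiply]
  simp [CFC.sqrt_mul_sqrt_self A hA.nonneg, CFC.sqrt_mul_sqrt_self D hD.nonneg]

lemma msqrt_smul {n : Type*} [Fintype n] [DecidableEq n]
    {ρ : Matrix n n ℂ} (h : ρ.PosSemidef) {r : ℝ} (hr : 0 ≤ r) :
    msqrt ((r : ℂ) • ρ) = ((Real.sqrt r : ℂ)) • msqrt ρ := by
  rw [msqrt_of_psd (psd_smul h hr), msqrt_of_psd h]
  refine (psd_eq_sqrt_of_sq_eq (psd_smul (Matrix.nonneg_iff_posSemidef.mp (CFC.sqrt_nonneg ρ)) (Real.sqrt_nonneg r)) _ ?_).symm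
  rw [smul_pow, CFC.sq_sqrt ρ h.nonneg]
  congr 1
  rw [← Complex.ofReal_pow, Real.sq_sqrt hr]

lemma msqrt_zero {n : Type*} [Fintype n] [DecidableEq n] :
    msqrt (0 : Matrix n n ℂ) = 0 := by
  rw [msqrt_of_psd Matrix.PosSemidef.zero]
  refine (psd_eq_sqrt_of_sq_eq Matrix.PosSemidef.zero _ ?_).symm
  simp

/-- Additivity of the generalized 1/2-affinity of coherence for block-diagonal
states `ρ = p ρ₁ ⊕ (1-p) ρ₂` on `H = H₁ ⊕ H₂`, where each projection `P m`
projects into `H₁` (for `m ∈ Λ₁`) or into `H₂` (for `m ∈ Λ₂`). -/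
theorem affinity_coherence_additive {d₁ d₂ M : ℕ}
    (P : Fin M → Matrix (Fin d₁ ⊕ Fin d₂) (Fin d₁ ⊕ Fin d₂) ℂ)
    (hPh : ∀ m, (P m).IsHermitian) (hPi : ∀ m, P m * P m = P m)
    (hPo : ∀ m m', m ≠ m' → P m * P m' = 0) (hPs : ∑ m, P m = 1)
    (Λ₁ Λ₂ : Finset (Fin M)) (hdisj : Disjoint Λ₁ Λ₂) (hcover : Λ₁ ∪ Λ₂ = Finset.univ)
    (hΛ₁ : ∀ m ∈ Λ₁, P m * Matrix.fromBlocks 1 0 0 0 = P m ∧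
      Matrix.fromBlocks 1 0 0 0 * P m = P m)
    (hΛ₂ : ∀ m ∈ Λ₂, P m * Matrix.fromBlocks 0 0 0 1 = P m ∧
      Matrix.fromBlocks 0 0 0 1 * P m = P m)
    (ρ₁ : Matrix (Fin d₁) (Fin d₁) ℂ) (hρ₁ : ρ₁.PosSemidef) (hρ₁tr : ρ₁.trace = 1)
    (ρ₂ : Matrix (Fin d₂) (Fin d₂) ℂ) (hρ₂ : ρ₂.PosSemidef) (hρ₂tr : ρ₂.trace = 1)
    (p : ℝ) (hp0 : 0 ≤ p) (hp1 : p ≤ 1) :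
    1 - ∑ m, ((P m * msqrt (Matrix.fromBlocks ((p : ℂ) • ρ₁) 0 0
          (((1 - p : ℝ) : ℂ) • ρ₂)) * P m) ^ 2).trace.re =
      p * (1 - ∑ m ∈ Λ₁, ((P m * msqrt (Matrix.fromBlocks ρ₁ 0 0 0) * P m) ^ 2).trace.re) +
      (1 - p) * (1 - ∑ m ∈ Λ₂, ((P m * msqrt (Matrix.fromBlocks 0 0 0 ρ₂) * P m) ^ 2).trace.re) := by
  have hq0 : (0 : ℝ) ≤ 1 - p := by linarith
  set s₁ := msqrt ρ₁ with hs₁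
  set s₂ := msqrt ρ₂ with hs₂
  have hS : msqrt (Matrix.fromBlocks ((p : ℂ) • ρ₁) 0 0 (((1 - p : ℝ) : ℂ) • ρ₂)) =
      Matrix.fromBlocks ((Real.sqrt p : ℂ) • s₁) 0 0 ((Real.sqrt (1 - p) : ℂ) • s₂) := by
    rw [msqrt_fromBlocks (psd_smul hρ₁ hp0) (psd_smul hρ₂ hq0),
      msqrt_smul hρ₁ hp0, msqrt_smul hρ₂ hq0]
  have hS₁ : msqrt (Matrix.fromBlocks ρ₁ 0 0 (0 : Matrix (Fin d₂) (Fin d₂) ℂ)) =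
      Matrix.fromBlocks s₁ 0 0 0 := by
    rw [msqrt_fromBlocks hρ₁ Matrix.PosSemidef.zero, msqrt_zero]
  have hS₂ : msqrt (Matrix.fromBlocks (0 : Matrix (Fin d₁) (Fin d₁) ℂ) 0 0 ρ₂) =
      Matrix.fromBlocks 0 0 0 s₂ := by
    rw [msqrt_fromBlocks Matrix.PosSemidef.zero hρ₂, msqrt_zero]
  -- per-term identities
  have key₁ : ∀ m ∈ Λ₁, ((P m * msqrt (Matrix.fromBlocks ((p : ℂ) • ρ₁) 0 0
        (((1 - p : ℝ) : ℂ) • ρ₂)) * P m) ^ 2).trace.re =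
      p * ((P m * msqrt (Matrix.fromBlocks ρ₁ 0 0 0) * P m) ^ 2).trace.re := by
    intro m hm
    rw [hS, hS₁]
    have h1 := (hΛ₁ m hm).1
    have h2 := (hΛ₁ m hm).2
    have hmid : Matrix.fromBlocks (1 : Matrix (Fin d₁) (Fin d₁) ℂ) 0 0 0 *
        Matrix.fromBlocks ((Real.sqrt p : ℂ) • s₁) 0 0 ((Real.sqrt (1 - p) : ℂ) • s₂) *
        Matrix.fromBlocks 1 0 0 0 =
        (Real.sqrt p : ℂ) • Matrix.fromBlocks s₁ 0 0 0 := by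
      rw [Matrix.fromBlocks_multiply, Matrix.fromBlocks_multiply]
      simp [Matrix.fromBlocks_smul, Matrix.mul_smul]
    have this1 : P m * Matrix.fromBlocks ((Real.sqrt p : ℂ) • s₁) 0 0
        ((Real.sqrt (1 - p) : ℂ) • s₂) * P m =
        (Real.sqrt p : ℂ) • (P m * Matrix.fromBlocks s₁ 0 0 0 * P m) := by
      calc P m * Matrix.fromBlocks ((Real.sqrt p : ℂ) • s₁) 0 0
            ((Real.sqrt (1 - p) : ℂ) • s₂) * P m
          = (P m * Matrix.fromBlocks 1 0 0 0) *
            Matrix.fromBlocks ((Real.sqrt p : ℂ) • s₁) 0 0 ((Real.sqrt (1 - p) : ℂ) • s₂) *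
            (Matrix.fromBlocks 1 0 0 0 * P m) := by rw [h1, h2]
        _ = P m * (Matrix.fromBlocks 1 0 0 0 *
            Matrix.fromBlocks ((Real.sqrt p : ℂ) • s₁) 0 0 ((Real.sqrt (1 - p) : ℂ) • s₂) *
            Matrix.fromBlocks 1 0 0 0) * P m := by simp only [mul_assoc]
        _ = (Real.sqrt p : ℂ) • (P m * Matrix.fromBlocks s₁ 0 0 0 * P m) := by
            rw [hmid, Matrix.mul_smul, Matrix.smul_mul]
    have hsq : ((Real.sqrt p : ℂ)) ^ 2 = (p : ℂ) := by
      rw [← Complex.ofReal_pow, Real.sq_sqrt hp0]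
    rw [this1, smul_pow, Matrix.trace_smul, smul_eq_mul, hsq, Complex.re_ofReal_mul]
  have key₂ : ∀ m ∈ Λ₂, ((P m * msqrt (Matrix.fromBlocks ((p : ℂ) • ρ₁) 0 0
        (((1 - p : ℝ) : ℂ) • ρ₂)) * P m) ^ 2).trace.re =
      (1 - p) * ((P m * msqrt (Matrix.fromBlocks 0 0 0 ρ₂) * P m) ^ 2).trace.re := by
    intro m hm
    rw [hS, hS₂]
    have h1 := (hΛ₂ m hm).1
    have h2 := (hΛ₂ m hm).2
    have hmid : Matrix.fromBlocks (0 : Matrix (Fin d₁) (Fin d₁) ℂ) 0 0 1 *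
        Matrix.fromBlocks ((Real.sqrt p : ℂ) • s₁) 0 0 ((Real.sqrt (1 - p) : ℂ) • s₂) *
        Matrix.fromBlocks 0 0 0 1 =
        (Real.sqrt (1 - p) : ℂ) • Matrix.fromBlocks 0 0 0 s₂ := by
      rw [Matrix.fromBlocks_multiply, Matrix.fromBlocks_multiply]
      simp [Matrix.fromBlocks_smul, Matrix.mul_smul]
    have this1 : P m * Matrix.fromBlocks ((Real.sqrt p : ℂ) • s₁) 0 0
        ((Real.sqrt (1 - p) : ℂ) • s₂) * P m =
        (Real.sqrt (1 - p) : ℂ) • (P m * Matrix.fromBlocks 0 0 0 s₂ * P m) := by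
      calc P m * Matrix.fromBlocks ((Real.sqrt p : ℂ) • s₁) 0 0
            ((Real.sqrt (1 - p) : ℂ) • s₂) * P m
          = (P m * Matrix.fromBlocks 0 0 0 1) *
            Matrix.fromBlocks ((Real.sqrt p : ℂ) • s₁) 0 0 ((Real.sqrt (1 - p) : ℂ) • s₂) *
            (Matrix.fromBlocks 0 0 0 1 * P m) := by rw [h1, h2]
        _ = P m * (Matrix.fromBlocks 0 0 0 1 *
            Matrix.fromBlocks ((Real.sqrt p : ℂ) • s₁) 0 0 ((Real.sqrt (1 - p) : ℂ) • s₂) *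
            Matrix.fromBlocks 0 0 0 1) * P m := by simp only [mul_assoc]
        _ = (Real.sqrt (1 - p) : ℂ) • (P m * Matrix.fromBlocks 0 0 0 s₂ * P m) := by
            rw [hmid, Matrix.mul_smul, Matrix.smul_mul]
    have hsq : ((Real.sqrt (1 - p) : ℂ)) ^ 2 = ((1 - p : ℝ) : ℂ) := by
      rw [← Complex.ofReal_pow, Real.sq_sqrt hq0]
    rw [this1, smul_pow, Matrix.trace_smul, smul_eq_mul, hsq, Complex.re_ofReal_mul]
  rw [← hcover, Finset.sum_union hdisj, Finset.sum_congr rfl key₁, Finset.sum_congr rfl key₂,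
    ← Finset.mul_sum, ← Finset.mul_sum]
  ring
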